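/- Let F be a real polynomial of degree less than N and r ≥ 0 an integer, and let β*_r F denote the remainder on dividing ∑_{k=0}^{N−1} β_{r,k}·F_k·X^{k+r} by A(X) = X^N + 2^{−b} X − 1, where F_k is the coefficient of X^k in F. Then every coefficient of β*_r F has absolute value at most 2^{−r(b−2)} · max_{0≤k<N} |F_k|. -/

import Mathlib

open Polynomial

/-- Generalized binomial coefficient `C(x, r) = x (x-1) ⋯ (x-r+1) / r!`. -/
noncomputable def gbc (x : ℝ) (r : ℕ) : ℝ :=
  (∏ j ∈ Finset.range r, (x - j)) / (r.factorial : ℝ)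

/-- `β_{r,k} = C(-k/N, r) (-2^(-b))^r`. -/
noncomputable def betaC (b N r k : ℕ) : ℝ :=
  gbc (-(k : ℝ) / N) r * (-(2:ℝ) ^ (-(b:ℤ))) ^ r

/-- The polynomial `A(X) = X^N + 2^(-b) X - 1` over `ℝ`. -/
noncomputable def Apoly (b N : ℕ) : Polynomial ℝ :=
  X ^ N + C ((2:ℝ) ^ (-(b:ℤ))) * X - 1

/-- `β*_r F`: the remainder of `∑_{k<N} β_{r,k} F_k X^(k+r)` modulo `A(X)`. -/
noncomputable def bstar (b N r : ℕ) (F : Polynomial ℝ) : Polynomial ℝ :=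
  (∑ k ∈ Finset.range N, C (betaC b N r k * F.coeff k) * X ^ (k + r)) %ₘ Apoly b N

lemma Amonic (b N : ℕ) (hN : 3 ≤ N) : (Apoly b N).Monic := by
  unfold Apoly; monicity!
  rw [if_pos (by omega), if_neg (by omega)]; norm_num

lemma Adeg (b N : ℕ) (hN : 3 ≤ N) : (Apoly b N).degree = N := by
  unfold Apoly; compute_degree!
  all_goals first
    | (rw [if_neg (by omega), if_neg (by omega)]; norm_num)
    | omega
    | (simp [Nat.cast_withBot]; omega)

lemma AnatDeg (b N : ℕ) (hN : 3 ≤ N) : (Apoly b N).natDegree = N :=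
  natDegree_eq_of_degree_eq_some (Adeg b N hN)

lemma AcoeffN (b N : ℕ) (hN : 3 ≤ N) : (Apoly b N).coeff N = 1 := by
  unfold Apoly
  simp only [coeff_sub, coeff_add, coeff_X_pow, coeff_C_mul, coeff_X, coeff_one]
  split_ifs <;> first | omega | norm_num

lemma Acoeff_le (b N : ℕ) (hN : 3 ≤ N) (j : ℕ) : |(Apoly b N).coeff j| ≤ 1 := by
  have hε0 : (0:ℝ) < (2:ℝ) ^ (-(b:ℤ)) := by positivity
  have hε1 : (2:ℝ) ^ (-(b:ℤ)) ≤ 1 := by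
    calc (2:ℝ) ^ (-(b:ℤ)) ≤ (2:ℝ) ^ (0:ℤ) := zpow_le_zpow_right₀ one_le_two (by omega)
    _ = 1 := by norm_num
  unfold Apoly
  simp only [coeff_sub, coeff_add, coeff_X_pow, coeff_C_mul, coeff_X, coeff_one]
  split_ifs <;> first | omega | (rw [abs_le]; constructor <;> nlinarith)

lemma modA_coeff_bound (b N : ℕ) (hN : 3 ≤ N) :
    ∀ (m : ℕ) (P : Polynomial ℝ) (B : ℝ), P.degree < ((N + m : ℕ) : WithBot ℕ) →
      (∀ i, |P.coeff i| ≤ B) → ∀ i, |(P %ₘ Apoly b N).coeff i| ≤ 2 ^ m * B := by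
  intro m
  induction m with
  | zero =>
    intro P B hdeg hPB i
    rw [(modByMonic_eq_self_iff (Amonic b N hN)).mpr (by rw [Adeg b N hN]; simpa using hdeg)]
    simpa using hPB i
  | succ m ih =>
    intro P B hdeg hPB i
    have h0B : 0 ≤ B := le_trans (abs_nonneg _) (hPB 0)
    set c := P.coeff (N + m) with hc
    set Q := P - (C c * Apoly b N) * X ^ m with hQ
    have h0 : (C c * Apoly b N * X ^ m) %ₘ Apoly b N = 0 :=
      (modByMonic_eq_zero_iff_dvd (Amonic b N hN)).mpr ⟨C c * X ^ m, by ring⟩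
    have hmod : Q %ₘ Apoly b N = P %ₘ Apoly b N := by
      rw [hQ, sub_modByMonic, h0, sub_zero]
    have hQc : ∀ j, Q.coeff j
        = P.coeff j - (if m ≤ j then c * (Apoly b N).coeff (j - m) else 0) := by
      intro j
      simp only [hQ, coeff_sub, coeff_mul_X_pow', coeff_C_mul]
    have hQdeg : Q.degree < ((N + m : ℕ) : WithBot ℕ) := by
      rw [degree_lt_iff_coeff_zero]
      intro j hj
      rw [hQc j, if_pos (by omega)]
      rcases eq_or_lt_of_le hj with h | h
      · subst h
        rw [show N + m - m = N from by omega, AcoeffN b N hN, ← hc]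
        ring
      · have hPj : P.coeff j = 0 := by
          apply coeff_eq_zero_of_degree_lt
          refine lt_of_lt_of_le hdeg ?_
          exact_mod_cast (by omega : N + (m + 1) ≤ j)
        have hAj : (Apoly b N).coeff (j - m) = 0 := by
          apply coeff_eq_zero_of_natDegree_lt
          rw [AnatDeg b N hN]; omega
        rw [hPj, hAj]; ring
    have hQB : ∀ j, |Q.coeff j| ≤ 2 * B := by
      intro j
      rw [hQc j]
      split_ifs with h
      · calc |P.coeff j - c * (Apoly b N).coeff (j - m)|
            ≤ |P.coeff j| + |c| * |(Apoly b N).coeff (j - m)| := by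
              refine (abs_sub _ _).trans ?_
              rw [abs_mul]
        _ ≤ B + B * 1 := by
              refine add_le_add (hPB j) (mul_le_mul (hPB _) (Acoeff_le b N hN _)
                (abs_nonneg _) h0B)
        _ = 2 * B := by ring
      · rw [sub_zero]; linarith [hPB j]
    have := ih Q (2 * B) hQdeg hQB i
    rw [hmod] at this
    calc |(P %ₘ Apoly b N).coeff i| ≤ 2 ^ m * (2 * B) := this
    _ = 2 ^ (m + 1) * B := by ring

lemma abs_gbc_le_one {x : ℝ} (h0 : -1 ≤ x) (h1 : x ≤ 0) (r : ℕ) : |gbc x r| ≤ 1 := by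
  have hf : (0:ℝ) < r.factorial := by exact_mod_cast r.factorial_pos
  rw [gbc, abs_div, abs_of_pos hf, div_le_one hf, Finset.abs_prod]
  calc ∏ j ∈ Finset.range r, |x - (j:ℝ)|
      ≤ ∏ j ∈ Finset.range r, ((j:ℝ) + 1) := by
        refine Finset.prod_le_prod (fun j _ => abs_nonneg _) (fun j _ => ?_)
        have : (0:ℝ) ≤ j := Nat.cast_nonneg j
        rw [abs_le]; constructor <;> linarith
  _ = (r.factorial : ℝ) := by
        rw [← Finset.prod_range_add_one_eq_factorial r]
        push_cast
        rfl

lemma abs_betaC_le (b N r k : ℕ) (hN : 0 < N) (hk : k < N) :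
    |betaC b N r k| ≤ ((2:ℝ) ^ (-(b:ℤ))) ^ r := by
  have hε0 : (0:ℝ) < (2:ℝ) ^ (-(b:ℤ)) := by positivity
  rw [betaC, abs_mul, abs_pow, abs_neg, abs_of_pos hε0]
  have hx0 : -1 ≤ -(k:ℝ)/N := by
    rw [neg_div, neg_le_neg_iff, div_le_one (by exact_mod_cast hN)]
    exact_mod_cast hk.le
  have hx1 : -(k:ℝ)/N ≤ 0 := by
    apply div_nonpos_of_nonpos_of_nonneg <;> simp [Nat.cast_nonneg]
  calc |gbc (-(k:ℝ)/N) r| * ((2:ℝ) ^ (-(b:ℤ))) ^ r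
      ≤ 1 * ((2:ℝ) ^ (-(b:ℤ))) ^ r := by
        apply mul_le_mul_of_nonneg_right (abs_gbc_le_one hx0 hx1 r) (by positivity)
  _ = _ := one_mul _

/-- every coefficient of `β*_r F` is bounded by
`2^(-r(b-2)) · max_{k<N} |F_k|`. -/
theorem bstar_r_norm_bound (b N : ℕ) (hb : 4 ≤ b) (hN : 3 ≤ N)
    (F : Polynomial ℝ) (hF : F.natDegree < N) (r : ℕ) :
    ∀ i : ℕ, |(bstar b N r F).coeff i| ≤
      (2:ℝ) ^ (-((r : ℤ) * ((b : ℤ) - 2))) *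
        (Finset.range N).sup' (Finset.nonempty_range_iff.mpr (by omega))
          (fun k => |F.coeff k|) := by
  intro i
  set M := (Finset.range N).sup' (Finset.nonempty_range_iff.mpr (by omega))
     (fun k => |F.coeff k|) with hM
  have hM0 : (0:ℝ) ≤ M :=
    le_trans (abs_nonneg _)
      (Finset.le_sup' (fun k => |F.coeff k|) (Finset.mem_range.mpr (by omega : (0:ℕ) < N)))
  have hMk : ∀ k, k < N → |F.coeff k| ≤ M := fun k hk =>
    Finset.le_sup' (fun k => |F.coeff k|) (Finset.mem_range.mpr hk)
  set ε := (2:ℝ) ^ (-(b:ℤ)) with hε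
  have hε0 : (0:ℝ) < ε := by positivity
  set B := ε ^ r * M with hB
  have hB0 : 0 ≤ B := by positivity
  set S := ∑ k ∈ Finset.range N, C (betaC b N r k * F.coeff k) * X ^ (k + r) with hS
  have hScoeff : ∀ j, S.coeff j
      = ∑ k ∈ Finset.range N, if j = k + r then betaC b N r k * F.coeff k else 0 := by
    intro j
    rw [hS, finset_sum_coeff]
    refine Finset.sum_congr rfl fun k _ => ?_
    rw [coeff_C_mul, coeff_X_pow, mul_ite, mul_one, mul_zero]
  have hterm : ∀ k, k < N → |betaC b N r k * F.coeff k| ≤ B := by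
    intro k hk
    rw [abs_mul]
    exact mul_le_mul (abs_betaC_le b N r k (by omega) hk) (hMk k hk) (abs_nonneg _)
      (by positivity)
  have hSdeg : S.degree < ((N + r : ℕ) : WithBot ℕ) := by
    rw [degree_lt_iff_coeff_zero]
    intro j hj
    rw [hScoeff j]
    exact Finset.sum_eq_zero fun k hk =>
      if_neg (by have := Finset.mem_range.mp hk; omega)
  have hSB : ∀ j, |S.coeff j| ≤ B := by
    intro j
    rw [hScoeff j]
    by_cases hcase : r ≤ j ∧ j - r < N
    · rw [Finset.sum_eq_single (j - r)
        (fun k hk hne => if_neg (by have := Finset.mem_range.mp hk; omega))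
        (fun h => absurd (Finset.mem_range.mpr hcase.2) h)]
      rw [if_pos (by omega)]
      exact hterm _ hcase.2
    · rw [Finset.sum_eq_zero fun k hk =>
        if_neg (by have := Finset.mem_range.mp hk; omega)]
      simpa using hB0
  have hmain := modA_coeff_bound b N hN r S B hSdeg hSB i
  have hbstar : bstar b N r F = S %ₘ Apoly b N := rfl
  rw [hbstar]
  refine le_trans hmain ?_
  have key : (2:ℝ) ^ r * B = (2:ℝ) ^ ((r : ℤ) * (1 - (b:ℤ))) * M := by
    rw [hB, hε, ← zpow_natCast (2:ℝ) r, ← zpow_natCast ((2:ℝ) ^ (-(b:ℤ))) r,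
      ← zpow_mul, ← mul_assoc, ← zpow_add₀ (by norm_num : (2:ℝ) ≠ 0)]
    ring_nf
  rw [key]
  refine mul_le_mul_of_nonneg_right ?_ hM0
  refine zpow_le_zpow_right₀ one_le_two ?_
  have : (0:ℤ) ≤ (r:ℤ) := Int.natCast_nonneg r
  nlinarith
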